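/- If G is a graph with chromatic number χ, then the Ky Fan χ-norm of G satisfies ‖G‖_{F_χ} ≥ 2 σ₁(G), i.e., the sum of the χ largest singular values of the adjacency matrix is at least twice the largest singular value. -/

import Mathlib

open Finset

/-- Singular values (unsorted) of a complex matrix: square roots of eigenvalues of `A * Aᴴ`. -/
noncomputable def svalC {m n : ℕ} (A : Matrix (Fin m) (Fin n) ℂ) : Fin m → ℝ :=
  fun i => Real.sqrt ((Matrix.isHermitian_mul_conjTranspose_self A).eigenvalues i)

/-- Singular values of a complex matrix sorted in decreasing order. -/
noncomputable def svalCSorted {m n : ℕ} (A : Matrix (Fin m) (Fin n) ℂ) : Fin m → ℝ :=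
  svalC A ∘ ⇑(Tuple.sort (fun i => -(svalC A i)))

/-- Singular values (unsorted) of a real matrix. -/
noncomputable def svalR {m n : ℕ} (A : Matrix (Fin m) (Fin n) ℝ) : Fin m → ℝ :=
  fun i => Real.sqrt ((Matrix.isHermitian_mul_conjTranspose_self A).eigenvalues i)

/-- Singular values of a real matrix sorted in decreasing order. -/
noncomputable def svalRSorted {m n : ℕ} (A : Matrix (Fin m) (Fin n) ℝ) : Fin m → ℝ :=
  svalR A ∘ ⇑(Tuple.sort (fun i => -(svalR A i)))

/-- Ky Fan `k`-norm of a complex matrix: the sum of its `k` largest singular values. -/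
noncomputable def kyFanC {m n : ℕ} (A : Matrix (Fin m) (Fin n) ℂ) (k : ℕ) : ℝ :=
  ∑ i : Fin m, if (i : ℕ) < k then svalCSorted A i else 0

/-- Ky Fan `k`-norm of a real matrix. -/
noncomputable def kyFanR {m n : ℕ} (A : Matrix (Fin m) (Fin n) ℝ) (k : ℕ) : ℝ :=
  ∑ i : Fin m, if (i : ℕ) < k then svalRSorted A i else 0

/-- The adjacency matrix of a simple graph is Hermitian (over `ℝ`). -/
lemma adjHerm {n : ℕ} (G : SimpleGraph (Fin n)) [DecidableRel G.Adj] :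
    (G.adjMatrix ℝ).IsHermitian := by
  have h := G.isSymm_adjMatrix (α := ℝ)
  first
    | (rw [Matrix.IsHermitian, Matrix.conjTranspose_eq_transpose_of_trivial]; exact h)
    | simpa [Matrix.IsHermitian, Matrix.conjTranspose, Matrix.IsSymm, Matrix.transpose, Matrix.map, conj_trivial] using h

/-- Singular values of a graph (unsorted). -/
noncomputable def gsval {n : ℕ} (G : SimpleGraph (Fin n)) [DecidableRel G.Adj] : Fin n → ℝ :=
  svalR (G.adjMatrix ℝ)

/-- Singular values of a graph sorted in decreasing order. -/
noncomputable def gsvalSorted {n : ℕ} (G : SimpleGraph (Fin n)) [DecidableRel G.Adj] : Fin n → ℝ :=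
  svalRSorted (G.adjMatrix ℝ)

/-- Eigenvalues of a graph sorted in decreasing order: `geigSorted G 0 = μ₁ ≥ ⋯ ≥ μₙ`. -/
noncomputable def geigSorted {n : ℕ} (G : SimpleGraph (Fin n)) [DecidableRel G.Adj] : Fin n → ℝ :=
  (adjHerm G).eigenvalues ∘ ⇑(Tuple.sort (fun i => -((adjHerm G).eigenvalues i)))

/-- Ky Fan `k`-norm of a graph. -/
noncomputable def kyFanG {n : ℕ} (G : SimpleGraph (Fin n)) [DecidableRel G.Adj] (k : ℕ) : ℝ :=
  kyFanR (G.adjMatrix ℝ) k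


section Helpers

open Matrix Polynomial


/-- sorted-descending tuples agree for lists that are permutations of each other -/
lemma sortedDesc_eq_of_perm {n : ℕ} (a b : Fin n → ℝ)
    (h : (List.ofFn a).Perm (List.ofFn b)) :
    a ∘ ⇑(Tuple.sort (fun i => -(a i))) = b ∘ ⇑(Tuple.sort (fun i => -(b i))) := by
  set σa := Tuple.sort (fun i => -(a i)) with hσa
  set σb := Tuple.sort (fun i => -(b i)) with hσb
  have hma : Monotone ((fun i => -(a i)) ∘ ⇑σa) := Tuple.monotone_sort _
  have hmb : Monotone ((fun i => -(b i)) ∘ ⇑σb) := Tuple.monotone_sort _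
  have hperm : (List.ofFn ((fun i => -(a i)) ∘ ⇑σa)).Perm
      (List.ofFn ((fun i => -(b i)) ∘ ⇑σb)) := by
    refine (Equiv.Perm.ofFn_comp_perm σa _).trans (List.Perm.trans ?_
      (Equiv.Perm.ofFn_comp_perm σb _).symm)
    have h1 : List.ofFn (fun i => -(a i)) = (List.ofFn a).map (fun x => -x) := by
      rw [List.map_ofFn]; rfl
    have h2 : List.ofFn (fun i => -(b i)) = (List.ofFn b).map (fun x => -x) := by
      rw [List.map_ofFn]; rfl
    rw [h1, h2]
    exact h.map _
  have := List.Perm.eq_of_sortedLE hma.sortedLE_ofFn hmb.sortedLE_ofFn hperm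
  rw [List.ofFn_inj] at this
  funext i
  have := congrFun this i
  simp only [Function.comp_apply] at this ⊢
  linarith


lemma card_filter_lt_fin {n k : ℕ} (hk : k ≤ n) :
    ((univ : Finset (Fin n)).filter (fun i : Fin n => (i : ℕ) < k)).card = k := by
  have : ((univ : Finset (Fin n)).filter (fun i : Fin n => (i : ℕ) < k)) =
      (univ : Finset (Fin k)).map (Fin.castLEEmb hk) := by
    ext x
    simp only [mem_filter, mem_univ, true_and, mem_map]
    constructor
    · intro hx
      exact ⟨⟨x, hx⟩, rfl⟩
    · rintro ⟨j, rfl⟩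
      exact j.2
  rw [this, card_map, card_univ, Fintype.card_fin]

lemma topk_weight_antitone {n k : ℕ} (b t : Fin n → ℝ)
    (hmono : ∀ i j : Fin n, i ≤ j → b j ≤ b i) (hb : ∀ i, 0 ≤ b i)
    (ht0 : ∀ i, 0 ≤ t i) (ht1 : ∀ i, t i ≤ 1) (hts : ∑ i, t i ≤ (k : ℝ)) :
    ∑ i, t i * b i ≤ ∑ i : Fin n, if (i : ℕ) < k then b i else 0 := by
  rcases le_or_gt n k with hk | hk
  · calc ∑ i, t i * b i ≤ ∑ i, b i := by
          apply Finset.sum_le_sum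
          intro i _
          nlinarith [hb i, ht0 i, ht1 i]
      _ = ∑ i : Fin n, if (i : ℕ) < k then b i else 0 := by
          apply Finset.sum_congr rfl
          intro i _
          rw [if_pos (lt_of_lt_of_le i.2 hk)]
  · -- k < n
    set κ : Fin n := ⟨k, hk⟩ with hκ
    set K := (univ : Finset (Fin n)).filter (fun i : Fin n => (i : ℕ) < k) with hK
    have hcard : K.card = k := card_filter_lt_fin hk.le
    have hsplit : ∑ i, t i * b i =
        ∑ i ∈ K, t i * b i + ∑ i ∈ univ.filter (fun i : Fin n => ¬ ((i : ℕ) < k)), t i * b i := by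
      rw [hK, Finset.sum_filter_add_sum_filter_not]
    have htsplit : ∑ i ∈ K, t i +
        ∑ i ∈ univ.filter (fun i : Fin n => ¬ ((i : ℕ) < k)), t i ≤ k := by
      rw [hK, Finset.sum_filter_add_sum_filter_not]; exact hts
    have hbκ : 0 ≤ b κ := hb κ
    have h1 : ∑ i ∈ univ.filter (fun i : Fin n => ¬ ((i : ℕ) < k)), t i * b i ≤
        (∑ i ∈ univ.filter (fun i : Fin n => ¬ ((i : ℕ) < k)), t i) * b κ := by
      rw [Finset.sum_mul]
      apply Finset.sum_le_sum
      intro i hi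
      simp only [mem_filter, mem_univ, true_and, not_lt] at hi
      have hbi : b i ≤ b κ := hmono κ i hi
      nlinarith [ht0 i]
    have h2 : (∑ i ∈ univ.filter (fun i : Fin n => ¬ ((i : ℕ) < k)), t i) * b κ ≤
        ((k : ℝ) - ∑ i ∈ K, t i) * b κ := by
      apply mul_le_mul_of_nonneg_right _ hbκ
      linarith
    have h3 : ∑ i ∈ K, t i * b i + ((k : ℝ) - ∑ i ∈ K, t i) * b κ ≤ ∑ i ∈ K, b i := by
      have hkr : (k : ℝ) = ∑ _i ∈ K, (1 : ℝ) := by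
        rw [Finset.sum_const, hcard]; simp
      rw [hkr, ← Finset.sum_sub_distrib, Finset.sum_mul, ← Finset.sum_add_distrib]
      apply Finset.sum_le_sum
      intro i hi
      rw [hK, mem_filter] at hi
      have hbi : b κ ≤ b i := hmono i κ (le_of_lt hi.2)
      nlinarith [ht1 i, ht0 i, hb i]
    have hrhs : ∑ i : Fin n, (if (i : ℕ) < k then b i else 0) = ∑ i ∈ K, b i := by
      rw [hK, Finset.sum_filter]
    rw [hsplit, hrhs]
    linarith

lemma topk_weight {n k : ℕ} (b t : Fin n → ℝ) (hb : ∀ i, 0 ≤ b i)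
    (ht0 : ∀ i, 0 ≤ t i) (ht1 : ∀ i, t i ≤ 1) (hts : ∑ i, t i ≤ (k : ℝ)) :
    ∑ i, t i * b i ≤
      ∑ i : Fin n, if (i : ℕ) < k then (b ∘ ⇑(Tuple.sort (fun i => -(b i)))) i else 0 := by
  set σ := Tuple.sort (fun i => -(b i)) with hσ
  have hre : ∑ i, t i * b i = ∑ i, (t ∘ ⇑σ) i * (b ∘ ⇑σ) i := by
    exact (Equiv.sum_comp σ (fun i => t i * b i)).symm
  rw [hre]
  apply topk_weight_antitone
  · intro i j hij
    have hm : Monotone ((fun i => -(b i)) ∘ ⇑σ) := Tuple.monotone_sort _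
    have := hm hij
    simp only [Function.comp_apply] at this ⊢
    linarith
  · intro i; exact hb _
  · intro i; exact ht0 _
  · intro i; exact ht1 _
  · have : ∑ i, (t ∘ ⇑σ) i = ∑ i, t i := Equiv.sum_comp σ t
    rw [this]; exact hts


lemma charpoly_conj_units {R : Type*} [CommRing R] {n : Type*} [Fintype n] [DecidableEq n]
    (V W B : Matrix n n R) (hVW : V * W = 1) (hWV : W * V = 1) :
    (V * B * W).charpoly = B.charpoly := by
  have hmap : ∀ (M N : Matrix n n R),
      (C : R →+* R[X]).mapMatrix (M * N) =
        (C : R →+* R[X]).mapMatrix M * (C : R →+* R[X]).mapMatrix N := fun M N => by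
    simp [RingHom.mapMatrix_apply, Matrix.map_mul]
  have hcm : Matrix.charmatrix (V * B * W) =
      (C : R →+* R[X]).mapMatrix V * Matrix.charmatrix B * (C : R →+* R[X]).mapMatrix W := by
    rw [Matrix.charmatrix]
    rw [Matrix.charmatrix]
    rw [Matrix.mul_sub, Matrix.sub_mul]
    congr 1
    · -- scalar part
      have h1 : (C : R →+* R[X]).mapMatrix V * Matrix.scalar n (X : R[X]) =
          Matrix.scalar n (X : R[X]) * (C : R →+* R[X]).mapMatrix V :=
        (Matrix.scalar_commute (X : R[X]) (fun r => Commute.all _ _) _).symm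
      rw [h1, Matrix.mul_assoc, ← hmap, hVW]
      simp [Matrix.scalar]
    · rw [← hmap, ← hmap]
  rw [Matrix.charpoly, Matrix.charpoly, hcm, Matrix.det_mul, Matrix.det_mul]
  have : ((C : R →+* R[X]).mapMatrix V).det * ((C : R →+* R[X]).mapMatrix W).det = 1 := by
    rw [mul_comm, ← Matrix.det_mul, ← hmap, hWV]
    simp
  calc ((C : R →+* R[X]).mapMatrix V).det * (Matrix.charmatrix B).det *
        ((C : R →+* R[X]).mapMatrix W).det
      = (Matrix.charmatrix B).det *
        (((C : R →+* R[X]).mapMatrix V).det * ((C : R →+* R[X]).mapMatrix W).det) := by ring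
    _ = (Matrix.charmatrix B).det := by rw [this, mul_one]

lemma charpoly_diag {R : Type*} [CommRing R] {n : Type*} [Fintype n] [DecidableEq n]
    (e : n → R) : (Matrix.diagonal e).charpoly = ∏ i, (X - C (e i)) := by
  have : Matrix.charmatrix (Matrix.diagonal e) =
      Matrix.diagonal (fun i => (X : R[X]) - C (e i)) := by
    apply Matrix.ext
    intro i j
    by_cases h : i = j
    · subst h
      rw [Matrix.charmatrix_apply_eq]
      simp
    · rw [Matrix.charmatrix_apply_ne _ _ _ h, Matrix.diagonal_apply_ne _ h,
        Matrix.diagonal_apply_ne _ h]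
      simp
  rw [Matrix.charpoly, this, Matrix.det_diagonal]

lemma prod_X_sub_C_roots {n : ℕ} (d : Fin n → ℝ) :
    (∏ i, (X - C (d i))).roots = (List.ofFn d : Multiset ℝ) := by
  have h1 : ∏ i, (X - C (d i)) =
      (Multiset.map (fun a => X - C a) (List.ofFn d : Multiset ℝ)).prod := by
    have : Multiset.map (fun a => X - C a) (List.ofFn d : Multiset ℝ) =
        ((List.ofFn d).map (fun a => X - C a) : Multiset ℝ[X]) := by
      simp
    rw [this]
    have : ((List.ofFn d).map (fun a => X - C a)) = List.ofFn (fun i => X - C (d i)) := by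
      rw [List.map_ofFn]; rfl
    rw [this]
    have := List.prod_ofFn (f := fun i => X - C (d i))
    rw [Multiset.prod_coe, this]
  rw [h1, Polynomial.roots_multiset_prod_X_sub_C]


lemma charpoly_of_conj_diag {n : ℕ} (B : Matrix (Fin n) (Fin n) ℝ)
    (e : Fin n → ℝ) (V : Matrix (Fin n) (Fin n) ℝ) (hV : V ∈ Matrix.unitaryGroup (Fin n) ℝ)
    (hBe : B = V * Matrix.diagonal e * star V) :
    B.charpoly = ∏ i, (X - C (e i)) := by
  have h1 : V * star V = 1 := Matrix.mem_unitaryGroup_iff.mp hV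
  have h2 : star V * V = 1 := Matrix.mem_unitaryGroup_iff'.mp hV
  rw [hBe, charpoly_conj_units V (star V) _ h1 h2, charpoly_diag]

lemma eig_perm_of_conj {n : ℕ} (B : Matrix (Fin n) (Fin n) ℝ) (hB : B.IsHermitian)
    (e : Fin n → ℝ) (V : Matrix (Fin n) (Fin n) ℝ) (hV : V ∈ Matrix.unitaryGroup (Fin n) ℝ)
    (hBe : B = V * Matrix.diagonal e * star V) :
    (List.ofFn hB.eigenvalues).Perm (List.ofFn e) := by
  have hsp : B = (hB.eigenvectorUnitary : Matrix (Fin n) (Fin n) ℝ) *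
      Matrix.diagonal hB.eigenvalues * star (hB.eigenvectorUnitary : Matrix (Fin n) (Fin n) ℝ) := by
    have := hB.spectral_theorem
    simpa [RCLike.ofReal_real_eq_id] using this
  have hc1 : B.charpoly = ∏ i, (X - C (hB.eigenvalues i)) :=
    charpoly_of_conj_diag B _ _ (hB.eigenvectorUnitary).2 hsp
  have hc2 : B.charpoly = ∏ i, (X - C (e i)) := charpoly_of_conj_diag B _ _ hV hBe
  have : (List.ofFn hB.eigenvalues : Multiset ℝ) = (List.ofFn e : Multiset ℝ) := by
    rw [← prod_X_sub_C_roots, ← prod_X_sub_C_roots, ← hc1, ← hc2]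
  exact Multiset.coe_eq_coe.mp this


lemma two_abs_convex {ι : Type*} [Fintype ι] (ν ζ : ι → ℝ)
    (hνs : ∑ c, ν c = 0) (hζ : ∑ c, ζ c ^ 2 = 1) :
    2 * |∑ c, ν c * ζ c ^ 2| ≤ ∑ c, |ν c| := by
  have hζ1 : ∀ c, ζ c ^ 2 ≤ 1 := by
    intro c
    rw [← hζ]
    exact Finset.single_le_sum (fun i _ => sq_nonneg (ζ i)) (mem_univ c)
  have h1 : ∑ c, ν c * ζ c ^ 2 ≤ ∑ c, (|ν c| + ν c) / 2 := by
    apply Finset.sum_le_sum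
    intro c _
    rcases le_or_gt 0 (ν c) with h | h
    · have : |ν c| = ν c := abs_of_nonneg h
      nlinarith [hζ1 c, sq_nonneg (ζ c)]
    · have : |ν c| = -ν c := abs_of_neg h
      nlinarith [hζ1 c, sq_nonneg (ζ c)]
  have h2 : -(∑ c, ν c * ζ c ^ 2) ≤ ∑ c, (|ν c| - ν c) / 2 := by
    rw [← Finset.sum_neg_distrib]
    apply Finset.sum_le_sum
    intro c _
    rcases le_or_gt 0 (ν c) with h | h
    · have : |ν c| = ν c := abs_of_nonneg h
      nlinarith [hζ1 c, sq_nonneg (ζ c)]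
    · have : |ν c| = -ν c := abs_of_neg h
      nlinarith [hζ1 c, sq_nonneg (ζ c)]
  have e1 : ∑ c, (|ν c| + ν c) / 2 = (∑ c, |ν c|) / 2 := by
    rw [← Finset.sum_div, Finset.sum_add_distrib, hνs, add_zero]
  have e2 : ∑ c, (|ν c| - ν c) / 2 = (∑ c, |ν c|) / 2 := by
    rw [← Finset.sum_div, Finset.sum_sub_distrib, hνs, sub_zero]
  rw [e1] at h1; rw [e2] at h2
  rcases abs_cases (∑ c, ν c * ζ c ^ 2) with ⟨h, -⟩ | ⟨h, -⟩ <;> rw [h] <;> linarith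

end Helpers

open Matrix

/-- If `G` has chromatic number `χ`, then `‖G‖_{F_χ} ≥ 2 σ₁(G)`. -/
theorem kyFan_chromatic_ge {n : ℕ} (hn : 0 < n) (G : SimpleGraph (Fin n))
    [DecidableRel G.Adj] (χ : ℕ) (hχ : G.chromaticNumber = χ) :
    kyFanG G χ ≥ 2 * gsvalSorted G ⟨0, hn⟩ := by
  classical
  set A : Matrix (Fin n) (Fin n) ℝ := G.adjMatrix ℝ with hAdef
  have hA : A.IsHermitian := adjHerm G
  set μ : Fin n → ℝ := hA.eigenvalues with hμdef
  set V : Matrix (Fin n) (Fin n) ℝ := (hA.eigenvectorUnitary : Matrix (Fin n) (Fin n) ℝ)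
    with hVdef
  have hVmem : V ∈ Matrix.unitaryGroup (Fin n) ℝ := hA.eigenvectorUnitary.2
  have hVV : V * star V = 1 := Matrix.mem_unitaryGroup_iff.mp hVmem
  have hVV' : star V * V = 1 := Matrix.mem_unitaryGroup_iff'.mp hVmem
  have hAsp : A = V * Matrix.diagonal μ * star V := by
    have := hA.spectral_theorem
    simpa [RCLike.ofReal_real_eq_id] using this
  -- coloring
  have hcol : G.Colorable χ := (SimpleGraph.chromaticNumber_le_iff_colorable).mp (le_of_eq hχ)
  obtain ⟨CC⟩ := hcol
  have hA0 : ∀ u v, CC u = CC v → A u v = 0 := by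
    intro u v huv
    by_cases hadj : G.Adj u v
    · exact absurd huv (CC.valid hadj)
    · simp [hAdef, hadj]
  -- multiset of singular values equals multiset of |eigenvalues|
  have hAAH : A * Aᴴ = V * Matrix.diagonal (fun i => μ i ^ 2) * star V := by
    have h2 : star V * (V * (Matrix.diagonal μ * star V)) = Matrix.diagonal μ * star V := by
      rw [← Matrix.mul_assoc, hVV', Matrix.one_mul]
    have h3 : Matrix.diagonal μ * (Matrix.diagonal μ * star V) =
        Matrix.diagonal (fun i => μ i ^ 2) * star V := by
      rw [← Matrix.mul_assoc, Matrix.diagonal_mul_diagonal]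
      congr 1
      funext i
      ring
    conv_lhs => rw [hA.eq, hAsp]
    simp only [Matrix.mul_assoc]
    rw [h2, h3]
  have hperm2 : (List.ofFn (svalR A)).Perm (List.ofFn (fun i => |μ i|)) := by
    have hp1 : (List.ofFn ((Matrix.isHermitian_mul_conjTranspose_self A).eigenvalues)).Perm
        (List.ofFn (fun i => μ i ^ 2)) :=
      eig_perm_of_conj _ (Matrix.isHermitian_mul_conjTranspose_self A) _ V hVmem hAAH
    have e1 : List.ofFn (svalR A) =
        (List.ofFn ((Matrix.isHermitian_mul_conjTranspose_self A).eigenvalues)).map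
          Real.sqrt := by
      rw [List.map_ofFn]; rfl
    have e2 : (List.ofFn (fun i => μ i ^ 2)).map Real.sqrt =
        List.ofFn (fun i => |μ i|) := by
      rw [List.map_ofFn]
      congr 1
      funext i
      exact Real.sqrt_sq_eq_abs (μ i)
    rw [e1, ← e2]
    exact hp1.map Real.sqrt
  have hsorted : svalRSorted A = (fun i => |μ i|) ∘ ⇑(Tuple.sort (fun i => -(|μ i|))) := by
    have := sortedDesc_eq_of_perm (svalR A) (fun i => |μ i|) hperm2
    exact this
  -- argmax eigenvalue
  obtain ⟨lstar, -, hlstar⟩ := Finset.exists_max_image (univ : Finset (Fin n))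
    (fun l => |μ l|) ⟨⟨0, hn⟩, mem_univ _⟩
  -- the eigenvector
  set x : Fin n → ℝ := fun v => V v lstar with hxdef
  have hxnorm : ∑ v, x v ^ 2 = 1 := by
    have h := congrFun (congrFun hVV' lstar) lstar
    rw [Matrix.mul_apply] at h
    calc ∑ v, x v ^ 2 = ∑ v, star V lstar v * V v lstar := by
          apply Finset.sum_congr rfl
          intro v _
          rw [Matrix.star_apply, star_trivial]
          ring
      _ = 1 := by rw [h, Matrix.one_apply_eq]
  have hAV : A * V = V * Matrix.diagonal μ := by
    rw [hAsp]
    simp only [Matrix.mul_assoc]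
    rw [hVV', Matrix.mul_one]
  have hAx : ∀ v, (A *ᵥ x) v = x v * μ lstar := by
    intro v
    have h1 : (A *ᵥ x) v = (A * V) v lstar := by
      simp [Matrix.mulVec, Matrix.mul_apply, dotProduct, hxdef]
    rw [h1, hAV, Matrix.mul_diagonal]
  -- color class weights
  set p : Fin χ → ℝ := fun c => ∑ v, if CC v = c then x v ^ 2 else 0 with hpdef
  have hp0 : ∀ c, 0 ≤ p c := by
    intro c
    apply Finset.sum_nonneg
    intro v _
    positivity
  have hpx : ∀ v, x v ^ 2 ≤ p (CC v) := by
    intro v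
    have := Finset.single_le_sum (f := fun u => if CC u = CC v then x u ^ 2 else 0)
      (fun u _ => by positivity) (mem_univ v)
    simpa using this
  have hpsum : ∑ c, p c = 1 := by
    rw [hpdef]
    rw [Finset.sum_comm]
    calc ∑ v, ∑ c, (if CC v = c then x v ^ 2 else 0)
        = ∑ v, x v ^ 2 := by
          apply Finset.sum_congr rfl
          intro v _
          rw [Finset.sum_ite_eq]
          simp
      _ = 1 := hxnorm
  -- the subtype of "active" colors
  set S := {c : Fin χ // p c ≠ 0} with hSdef
  have hcardS : (Fintype.card S : ℝ) ≤ (χ : ℝ) := by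
    have := Fintype.card_subtype_le (fun c : Fin χ => p c ≠ 0)
    exact_mod_cast le_trans (Nat.cast_le.mpr this) (by simp)
  set E : Matrix (Fin n) S ℝ :=
    Matrix.of (fun v c => if CC v = c.1 then x v / Real.sqrt (p c.1) else 0) with hEdef
  have hppos : ∀ c : S, 0 < p c.1 := fun c => lt_of_le_of_ne (hp0 c.1) (Ne.symm c.2)
  have hEE : Eᴴ * E = 1 := by
    apply Matrix.ext
    intro c d
    rw [Matrix.mul_apply]
    by_cases hcd : c = d
    · subst hcd
      rw [Matrix.one_apply_eq]
      have hterm : ∀ v, Eᴴ c v * E v c = (if CC v = c.1 then x v ^ 2 else 0) / p c.1 := by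
        intro v
        rw [Matrix.conjTranspose_apply, star_trivial]
        by_cases h : CC v = c.1
        · simp only [hEdef, Matrix.of_apply, if_pos h]
          rw [div_mul_div_comm, Real.mul_self_sqrt (hp0 c.1)]
          ring_nf
        · simp [hEdef, h]
      rw [Finset.sum_congr rfl (fun v _ => hterm v), ← Finset.sum_div]
      exact div_self c.2
    · rw [Matrix.one_apply_ne hcd]
      apply Finset.sum_eq_zero
      intro v _
      have hne : c.1 ≠ d.1 := fun h => hcd (Subtype.ext h)
      rw [Matrix.conjTranspose_apply, star_trivial]
      by_cases h1 : CC v = c.1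
      · have h2 : CC v ≠ d.1 := fun h => hne (h1.symm.trans h)
        simp [hEdef, h2]
      · simp [hEdef, h1]
  set M : Matrix S S ℝ := Eᴴ * A * E with hMdef
  have hM : M.IsHermitian := Matrix.isHermitian_conjTranspose_mul_mul E hA
  have hMdiag : ∀ c, M c c = 0 := by
    intro c
    rw [hMdef, Matrix.mul_apply]
    apply Finset.sum_eq_zero
    intro v _
    by_cases hv : CC v = c.1
    · have hinner : (Eᴴ * A) c v = 0 := by
        rw [Matrix.mul_apply]
        apply Finset.sum_eq_zero
        intro u _
        rw [Matrix.conjTranspose_apply, star_trivial]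
        by_cases hu : CC u = c.1
        · rw [hA0 u v (hu.trans hv.symm), mul_zero]
        · simp [hEdef, hu]
      rw [hinner, zero_mul]
    · have : E v c = 0 := by simp [hEdef, hv]
      rw [this, mul_zero]
  set ν : S → ℝ := hM.eigenvalues with hνdef
  set U : Matrix S S ℝ := (hM.eigenvectorUnitary : Matrix S S ℝ) with hUdef
  have hUmem : U ∈ Matrix.unitaryGroup S ℝ := hM.eigenvectorUnitary.2
  have hUU : U * star U = 1 := Matrix.mem_unitaryGroup_iff.mp hUmem
  have hUU' : star U * U = 1 := Matrix.mem_unitaryGroup_iff'.mp hUmem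
  have hMsp : star U * M * U = Matrix.diagonal ν := by
    have := hM.conjStarAlgAut_star_eigenvectorUnitary
    simpa [RCLike.ofReal_real_eq_id] using this
  have hνsum : ∑ c, ν c = 0 := by
    have h1 : Matrix.trace (Matrix.diagonal ν) = ∑ c, ν c := Matrix.trace_diagonal ν
    have h2 : Matrix.trace (star U * M * U) = Matrix.trace M := by
      rw [Matrix.trace_mul_cycle, hUU, Matrix.one_mul]
    have h3 : Matrix.trace M = 0 := by
      have : Matrix.trace M = ∑ c, M c c := by
        simp [Matrix.trace, Matrix.diag]
      rw [this]
      exact Finset.sum_eq_zero (fun c _ => hMdiag c)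
    rw [← h1, ← hMsp, h2, h3]
  -- ξ and ζ
  set ξ : S → ℝ := fun c => Real.sqrt (p c.1) with hξdef
  have hEξ : E *ᵥ ξ = x := by
    funext v
    have hgen : (E *ᵥ ξ) v = ∑ c : S, E v c * ξ c := by
      simp [Matrix.mulVec, dotProduct]
    rw [hgen]
    by_cases hv : p (CC v) = 0
    · have hx0 : x v = 0 := by
        have h1 : x v ^ 2 = 0 := le_antisymm (by rw [← hv]; exact hpx v) (sq_nonneg _)
        exact (pow_eq_zero_iff (by norm_num : (2:ℕ) ≠ 0)).mp h1
      rw [hx0]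
      apply Finset.sum_eq_zero
      intro c _
      have hne : CC v ≠ c.1 := fun h => c.2 (h ▸ hv)
      simp [hEdef, hne]
    · rw [Finset.sum_eq_single (⟨CC v, hv⟩ : S)]
      · show E v ⟨CC v, hv⟩ * ξ ⟨CC v, hv⟩ = x v
        have he : E v ⟨CC v, hv⟩ = x v / Real.sqrt (p (CC v)) := by
          simp [hEdef]
        have hx : ξ ⟨CC v, hv⟩ = Real.sqrt (p (CC v)) := rfl
        rw [he, hx, div_mul_cancel₀]
        exact Real.sqrt_ne_zero'.mpr (lt_of_le_of_ne (hp0 _) (Ne.symm hv))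
      · intro b _ hb
        have hne : CC v ≠ b.1 := fun h => hb (Subtype.ext h.symm)
        simp [hEdef, hne]
      · intro h
        exact absurd (mem_univ _) h
  have hξnorm : ∑ c, ξ c ^ 2 = 1 := by
    calc ∑ c : S, ξ c ^ 2 = ∑ c : S, p c.1 := by
          apply Finset.sum_congr rfl
          intro c _
          exact Real.sq_sqrt (hp0 c.1)
      _ = ∑ c ∈ univ.filter (fun c => p c ≠ 0), p c :=
          (Finset.sum_subtype (univ.filter (fun c => p c ≠ 0))
            (fun c => by simp) (fun c => p c)).symm
      _ = ∑ c, p c := Finset.sum_filter_ne_zero _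
      _ = 1 := hpsum
  set ζ : S → ℝ := star U *ᵥ ξ with hζdef
  have hsU : star U = Uᵀ := by
    rw [Matrix.star_eq_conjTranspose, Matrix.conjTranspose_eq_transpose_of_trivial]
  have hUUt : U * Uᵀ = 1 := by rw [← hsU]; exact hUU
  have hζnorm : ∑ c, ζ c ^ 2 = 1 := by
    have h1 : ∑ c, ζ c ^ 2 = ζ ⬝ᵥ ζ := by
      simp [dotProduct, pow_two]
    have h2 : ζ ⬝ᵥ ζ = ξ ⬝ᵥ ξ := by
      conv_lhs => rw [hζdef, hsU, Matrix.dotProduct_mulVec, Matrix.vecMul_transpose,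
        Matrix.mulVec_mulVec, hUUt, Matrix.one_mulVec]
    have h3 : ξ ⬝ᵥ ξ = ∑ c, ξ c ^ 2 := by
      simp [dotProduct, pow_two]
    rw [h1, h2, h3, hξnorm]
  have hconv : ∑ c, ν c * ζ c ^ 2 = μ lstar := by
    have e1 : ∑ c, ν c * ζ c ^ 2 = ζ ⬝ᵥ (Matrix.diagonal ν *ᵥ ζ) := by
      simp only [dotProduct, Matrix.mulVec_diagonal]
      apply Finset.sum_congr rfl
      intro c _
      ring
    have e2 : ζ ⬝ᵥ (Matrix.diagonal ν *ᵥ ζ) = ξ ⬝ᵥ (M *ᵥ ξ) := by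
      rw [← hMsp]
      have hUζ : U *ᵥ ζ = ξ := by
        rw [hζdef, Matrix.mulVec_mulVec, hUU, Matrix.one_mulVec]
      have expand : (star U * M * U) *ᵥ ζ = star U *ᵥ (M *ᵥ ξ) := by
        rw [← Matrix.mulVec_mulVec, ← Matrix.mulVec_mulVec, hUζ]
      rw [expand, hsU, Matrix.dotProduct_mulVec, Matrix.vecMul_transpose, hUζ]
    have e3 : ξ ⬝ᵥ (M *ᵥ ξ) = x ⬝ᵥ (A *ᵥ x) := by
      rw [hMdef]
      have hEt : Eᴴ = Eᵀ := Matrix.conjTranspose_eq_transpose_of_trivial E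
      rw [← Matrix.mulVec_mulVec, ← Matrix.mulVec_mulVec, hEξ, hEt,
        Matrix.dotProduct_mulVec, Matrix.vecMul_transpose, hEξ]
    have e4 : x ⬝ᵥ (A *ᵥ x) = μ lstar := by
      unfold dotProduct
      calc ∑ v, x v * (A *ᵥ x) v = ∑ v, x v ^ 2 * μ lstar := by
            apply Finset.sum_congr rfl
            intro v _
            rw [hAx v]
            ring
        _ = μ lstar := by rw [← Finset.sum_mul, hxnorm, one_mul]
    rw [e1, e2, e3, e4]
  -- Z and the weights t
  set W : Matrix (Fin n) S ℝ := E * U with hWdef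
  set Z : Matrix (Fin n) S ℝ := star V * W with hZdef
  have hZH : Zᴴ = Wᴴ * V := by
    rw [hZdef, Matrix.conjTranspose_mul, Matrix.star_eq_conjTranspose,
      Matrix.conjTranspose_conjTranspose]
  have hZZ : Zᴴ * Z = 1 := by
    have h4 : Eᴴ * (E * U) = U := by rw [← Matrix.mul_assoc, hEE, Matrix.one_mul]
    calc Zᴴ * Z = (Wᴴ * V) * (star V * W) := by rw [hZH, hZdef]
      _ = Wᴴ * (V * (star V * W)) := by simp only [Matrix.mul_assoc]
      _ = Wᴴ * W := by rw [← Matrix.mul_assoc V, hVV, Matrix.one_mul]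
      _ = Uᴴ * (Eᴴ * (E * U)) := by
          rw [hWdef, Matrix.conjTranspose_mul]
          simp only [Matrix.mul_assoc]
      _ = Uᴴ * U := by rw [h4]
      _ = 1 := by rw [← Matrix.star_eq_conjTranspose, hUU']
  have hdiagν : Matrix.diagonal ν = Zᴴ * Matrix.diagonal μ * Z := by
    have h1 : star U * (Eᴴ * A * E) * U = Wᴴ * A * W := by
      rw [hWdef, Matrix.conjTranspose_mul, ← Matrix.star_eq_conjTranspose U]
      simp only [Matrix.mul_assoc]
    have h2 : Wᴴ * A * W = Zᴴ * Matrix.diagonal μ * Z := by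
      rw [hZH, hZdef]
      conv_lhs => rw [hAsp]
      simp only [Matrix.mul_assoc]
    rw [← hMsp, hMdef, h1, h2]
  have hνc : ∀ c, ν c = ∑ l, μ l * Z l c ^ 2 := by
    intro c
    have h1 : ν c = (Matrix.diagonal ν) c c := (Matrix.diagonal_apply_eq ν c).symm
    rw [h1, hdiagν, Matrix.mul_apply]
    apply Finset.sum_congr rfl
    intro l _
    rw [Matrix.mul_diagonal, Matrix.conjTranspose_apply, star_trivial]
    ring
  set t : Fin n → ℝ := fun l => ∑ c, Z l c ^ 2 with htdef
  have ht0 : ∀ l, 0 ≤ t l := by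
    intro l; apply Finset.sum_nonneg; intro c _; positivity
  have ht1 : ∀ l, t l ≤ 1 := by
    intro l
    set P : Matrix (Fin n) (Fin n) ℝ := Z * Zᴴ with hPdef
    have hPP : P * P = P := by
      calc (Z * Zᴴ) * (Z * Zᴴ) = Z * ((Zᴴ * Z) * Zᴴ) := by simp only [Matrix.mul_assoc]
        _ = Z * Zᴴ := by rw [hZZ, Matrix.one_mul]
    have hPH : Pᴴ = P := Matrix.isHermitian_mul_conjTranspose_self Z
    have hPsymm : ∀ i j, P j i = P i j := by
      intro i j
      have := congrFun (congrFun hPH i) j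
      rw [Matrix.conjTranspose_apply, star_trivial] at this
      exact this
    have hPll : P l l = t l := by
      rw [hPdef, Matrix.mul_apply]
      apply Finset.sum_congr rfl
      intro c _
      rw [Matrix.conjTranspose_apply, star_trivial]
      ring
    have hexp : t l = ∑ j, P l j ^ 2 := by
      rw [← hPll]
      conv_lhs => rw [← hPP]
      rw [Matrix.mul_apply]
      apply Finset.sum_congr rfl
      intro j _
      rw [hPsymm j l]
      ring
    have h5 : P l l ^ 2 ≤ ∑ j, P l j ^ 2 :=
      Finset.single_le_sum (f := fun j => P l j ^ 2) (fun j _ => sq_nonneg _) (mem_univ l)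
    have h6 : t l ^ 2 ≤ t l := by
      conv_lhs => rw [← hPll]
      rw [hexp]
      exact h5
    nlinarith [ht0 l]
  have hts : ∑ l, t l ≤ (χ : ℝ) := by
    have h1 : ∑ l, t l = ∑ c : S, ∑ l, Z l c ^ 2 := Finset.sum_comm
    have h2 : ∀ c : S, ∑ l, Z l c ^ 2 = (1 : Matrix S S ℝ) c c := by
      intro c
      rw [← hZZ, Matrix.mul_apply]
      apply Finset.sum_congr rfl
      intro l _
      rw [Matrix.conjTranspose_apply, star_trivial]
      ring
    have h3 : ∑ l, t l = (Fintype.card S : ℝ) := by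
      rw [h1]
      rw [Finset.sum_congr rfl (fun c _ => h2 c)]
      simp [Matrix.one_apply_eq, Finset.card_univ]
    rw [h3]
    exact hcardS
  -- chain of inequalities
  have step1 : ∑ c, |ν c| ≤ ∑ l, t l * |μ l| := by
    calc ∑ c, |ν c| = ∑ c : S, |∑ l, μ l * Z l c ^ 2| := by
          rw [Finset.sum_congr rfl (fun c _ => by rw [hνc c])]
      _ ≤ ∑ c : S, ∑ l, |μ l * Z l c ^ 2| :=
          Finset.sum_le_sum (fun c _ => Finset.abs_sum_le_sum_abs _ _)
      _ = ∑ c : S, ∑ l, |μ l| * Z l c ^ 2 := by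
          apply Finset.sum_congr rfl
          intro c _
          apply Finset.sum_congr rfl
          intro l _
          rw [abs_mul, abs_of_nonneg (sq_nonneg (Z l c))]
      _ = ∑ l, ∑ c : S, |μ l| * Z l c ^ 2 := Finset.sum_comm
      _ = ∑ l, t l * |μ l| := by
          apply Finset.sum_congr rfl
          intro l _
          rw [← Finset.mul_sum, htdef]
          ring
  have step2 : 2 * |μ lstar| ≤ ∑ c, |ν c| := by
    have h := two_abs_convex ν ζ hνsum hζnorm
    rwa [hconv] at h
  have step3 : ∑ l, t l * |μ l| ≤ kyFanG G χ := by
    have h := topk_weight (fun i => |μ i|) t (fun i => abs_nonneg _) ht0 ht1 hts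
    calc ∑ l, t l * |μ l| ≤
        ∑ i : Fin n, if (i : ℕ) < χ then
          ((fun i => |μ i|) ∘ ⇑(Tuple.sort (fun i => -(|μ i|)))) i else 0 := h
      _ = kyFanG G χ := by
          unfold kyFanG kyFanR
          rw [← hAdef, hsorted]
  have step0 : 2 * gsvalSorted G ⟨0, hn⟩ ≤ 2 * |μ lstar| := by
    have h1 : gsvalSorted G ⟨0, hn⟩ =
        |μ (Tuple.sort (fun i => -(|μ i|)) ⟨0, hn⟩)| := by
      unfold gsvalSorted
      rw [← hAdef, hsorted]
      rfl
    rw [h1]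
    have := hlstar (Tuple.sort (fun i => -(|μ i|)) ⟨0, hn⟩) (mem_univ _)
    linarith
  linarith
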